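/- Fix k ≥ 1, the shift σ of ℤ, n ≥ 1, and two k-tuples x = (x₁,…,x_k), y = (y₁,…,y_k) of distinct integers. The set D_{x,y} of tuples (τ₁,…,τₙ) ∈ Sym(ℤ)ⁿ for which there exists φ in the subgroup generated by σ,τ₁,…,τₙ with x_j^φ = y_j for all j, is open and dense in Sym(ℤ)ⁿ. -/

import Mathlib

noncomputable section

/-- The topology of pointwise convergence on the symmetric group of `ℤ`:
induced from the product topology on `ℤ → ℤ` (with `ℤ` discrete). -/
instance permTop : TopologicalSpace (Equiv.Perm ℤ) :=
  TopologicalSpace.induced (fun π : Equiv.Perm ℤ => (π : ℤ → ℤ)) Pi.topologicalSpace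

/-- The shift permutation `a ↦ a + 1` of `ℤ`. -/
def shift : Equiv.Perm ℤ := Equiv.addRight 1

/-- The orbit of `a : ℤ` under the cyclic group generated by `γ`. -/
def permOrbit (γ : Equiv.Perm ℤ) (a : ℤ) : Set ℤ := {b | ∃ k : ℤ, (γ ^ k) a = b}

/-- Evaluation of a word on `n + 1` letters at `(σ, τ₁, …, τₙ)`, where the letter `0`
is sent to the shift `σ`. -/
def evalWord {n : ℕ} (τ : Fin n → Equiv.Perm ℤ) : FreeGroup (Fin (n + 1)) →* Equiv.Perm ℤ :=
  FreeGroup.lift (Fin.cons shift τ)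

lemma shift_pow (N : ℕ) : ∀ a : ℤ, (shift ^ N) a = a + N := by
  induction N with
  | zero => intro a; simp
  | succ m ih =>
    intro a
    rw [pow_succ, Equiv.Perm.mul_apply]
    have hs : shift a = a + 1 := rfl
    rw [hs, ih (a + 1)]
    push_cast; ring

lemma shift_zpow (m : ℤ) (a : ℤ) : (shift ^ m) a = a + m := by
  rcases m with N | N
  · simpa using shift_pow N a
  · rw [zpow_negSucc]
    have key : (shift ^ (N+1)) (a - (N+1)) = a := by
      rw [shift_pow (N+1) (a - (N+1))]; push_cast; ring
    have h2 : (shift ^ (N+1))⁻¹ a = a - (N+1) := by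
      rw [Equiv.Perm.inv_def, Equiv.symm_apply_eq]; exact key.symm
    rw [h2, Int.negSucc_eq]; push_cast; ring

lemma continuous_eval_perm (a : ℤ) : Continuous (fun π : Equiv.Perm ℤ => π a) :=
  (continuous_apply a).comp continuous_induced_dom

lemma isOpen_eval {n : ℕ} (i : Fin n) (a c : ℤ) :
    IsOpen {τ : Fin n → Equiv.Perm ℤ | τ i a = c} := by
  have : Continuous (fun τ : Fin n → Equiv.Perm ℤ => τ i a) :=
    (continuous_eval_perm a).comp (continuous_apply i)
  exact this.isOpen_preimage {c} (isOpen_discrete _)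

lemma isOpen_eval_inv {n : ℕ} (i : Fin n) (a c : ℤ) :
    IsOpen {τ : Fin n → Equiv.Perm ℤ | (τ i)⁻¹ a = c} := by
  have h : {τ : Fin n → Equiv.Perm ℤ | (τ i)⁻¹ a = c} =
      {τ : Fin n → Equiv.Perm ℤ | τ i c = a} := by
    ext τ
    constructor
    · intro h; simp only [Set.mem_setOf_eq] at h ⊢; rw [← h]
      exact (τ i).apply_symm_apply a
    · intro h; simp only [Set.mem_setOf_eq] at h ⊢; rw [← h]
      exact (τ i).symm_apply_apply c
  rw [h]; exact isOpen_eval i c a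

lemma isOpen_evalWord {n : ℕ} (w : FreeGroup (Fin (n + 1))) :
    ∀ a c : ℤ, IsOpen {τ : Fin n → Equiv.Perm ℤ | evalWord τ w a = c} := by
  induction w using FreeGroup.induction_on with
  | C1 =>
    intro a c
    by_cases h : a = c
    · convert isOpen_univ; simp [h]
    · convert isOpen_empty; simp [h]
  | of i =>
    intro a c
    have he : ∀ τ : Fin n → Equiv.Perm ℤ,
        evalWord τ (FreeGroup.of i) = (Fin.cons shift τ : Fin (n+1) → Equiv.Perm ℤ) i := by
      intro τ; exact FreeGroup.lift_apply_of
    induction i using Fin.cases with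
    | zero =>
      show IsOpen {τ : Fin n → Equiv.Perm ℤ | evalWord τ (FreeGroup.of (0 : Fin (n+1))) a = c}
      simp only [he, Fin.cons_zero]
      by_cases h : shift a = c
      · convert isOpen_univ; simp [h]
      · convert isOpen_empty; simp [h]
    | succ i' =>
      show IsOpen {τ : Fin n → Equiv.Perm ℤ | evalWord τ (FreeGroup.of i'.succ) a = c}
      have : {τ : Fin n → Equiv.Perm ℤ | evalWord τ (FreeGroup.of i'.succ) a = c} =
          {τ : Fin n → Equiv.Perm ℤ | τ i' a = c} := by
        ext τ; simp [he, Fin.cons_succ]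
      rw [this]; exact isOpen_eval i' a c
  | inv_of i _ =>
    intro a c
    have he : ∀ τ : Fin n → Equiv.Perm ℤ,
        evalWord τ (FreeGroup.of i)⁻¹ = ((Fin.cons shift τ : Fin (n+1) → Equiv.Perm ℤ) i)⁻¹ := by
      intro τ; rw [map_inv]; rw [show evalWord τ (FreeGroup.of i) = _ from FreeGroup.lift_apply_of]
    induction i using Fin.cases with
    | zero =>
      show IsOpen {τ : Fin n → Equiv.Perm ℤ | evalWord τ (FreeGroup.of (0 : Fin (n+1)))⁻¹ a = c}
      simp only [he, Fin.cons_zero]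
      by_cases h : shift⁻¹ a = c
      · convert isOpen_univ; simp [h]
      · convert isOpen_empty; simp only [Equiv.Perm.inv_def] at h; simp [h]
    | succ i' =>
      show IsOpen {τ : Fin n → Equiv.Perm ℤ | evalWord τ (FreeGroup.of i'.succ)⁻¹ a = c}
      have : {τ : Fin n → Equiv.Perm ℤ | evalWord τ (FreeGroup.of i'.succ)⁻¹ a = c} =
          {τ : Fin n → Equiv.Perm ℤ | (τ i')⁻¹ a = c} := by
        ext τ; simp [he, Fin.cons_succ]
      rw [this]; exact isOpen_eval_inv i' a c
  | mul u v hu hv =>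
    intro a c
    have : {τ : Fin n → Equiv.Perm ℤ | evalWord τ (u * v) a = c} =
        ⋃ b : ℤ, ({τ : Fin n → Equiv.Perm ℤ | evalWord τ v a = b} ∩
          {τ : Fin n → Equiv.Perm ℤ | evalWord τ u b = c}) := by
      ext τ
      simp only [Set.mem_setOf_eq, Set.mem_iUnion, Set.mem_inter_iff, map_mul,
        Equiv.Perm.mul_apply]
      exact ⟨fun h => ⟨evalWord τ v a, rfl, h⟩, fun ⟨b, h1, h2⟩ => by rw [h1]; exact h2⟩
    rw [this]
    exact isOpen_iUnion fun b => (hv a b).inter (hu b c)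

lemma mem_S_iff {k n : ℕ} (x y : Fin k → ℤ) (τ : Fin n → Equiv.Perm ℤ) :
    (∃ φ ∈ Subgroup.closure (Set.range (Fin.cons shift τ : Fin (n+1) → Equiv.Perm ℤ)),
      ∀ j, φ (x j) = y j) ↔
    ∃ w : FreeGroup (Fin (n + 1)), ∀ j, evalWord τ w (x j) = y j := by
  constructor
  · rintro ⟨φ, hφ, h⟩
    rw [← FreeGroup.range_lift_eq_closure] at hφ
    obtain ⟨w, rfl⟩ := hφ
    exact ⟨w, h⟩
  · rintro ⟨w, h⟩
    refine ⟨evalWord τ w, ?_, h⟩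
    rw [← FreeGroup.range_lift_eq_closure]
    exact ⟨w, rfl⟩

lemma isOpen_S {k n : ℕ} (x y : Fin k → ℤ) :
    IsOpen {τ : Fin n → Equiv.Perm ℤ |
      ∃ φ ∈ Subgroup.closure (Set.range (Fin.cons shift τ)), ∀ j, φ (x j) = y j} := by
  have : {τ : Fin n → Equiv.Perm ℤ |
      ∃ φ ∈ Subgroup.closure (Set.range (Fin.cons shift τ)), ∀ j, φ (x j) = y j} =
      ⋃ w : FreeGroup (Fin (n + 1)), ⋂ j : Fin k,
        {τ : Fin n → Equiv.Perm ℤ | evalWord τ w (x j) = y j} := by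
    ext τ
    simp only [Set.mem_setOf_eq, Set.mem_iUnion, Set.mem_iInter, mem_S_iff x y τ]
  rw [this]
  exact isOpen_iUnion fun w => isOpen_iInter_of_finite fun j => isOpen_evalWord w (x j) (y j)

lemma nbhd {n : ℕ} (U : Set (Fin n → Equiv.Perm ℤ)) (hU : IsOpen U)
    (τ : Fin n → Equiv.Perm ℤ) (hτ : τ ∈ U) :
    ∃ F : Finset ℤ, ∀ τ', (∀ i, ∀ z ∈ F, τ' i z = τ i z) → τ' ∈ U := by
  obtain ⟨I, u, h1, h2⟩ := isOpen_pi_iff.mp hU τ hτ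
  have key : ∀ i ∈ I, ∃ Fi : Finset ℤ, ∀ π : Equiv.Perm ℤ,
      (∀ z ∈ Fi, π z = τ i z) → π ∈ u i := by
    intro i hi
    obtain ⟨v, hv, hvu⟩ := isOpen_induced_iff.mp (h1 i hi).1
    have hmem : (⇑(τ i) : ℤ → ℤ) ∈ v := by
      have := (h1 i hi).2; rw [← hvu] at this; exact this
    obtain ⟨Fi, w, hw1, hw2⟩ := isOpen_pi_iff.mp hv _ hmem
    refine ⟨Fi, fun π hπ => ?_⟩
    rw [← hvu]
    apply hw2
    intro z hz
    show π z ∈ w z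
    rw [hπ z hz]
    exact (hw1 z hz).2
  choose Fi hFi using key
  refine ⟨I.attach.biUnion (fun i => Fi i.1 i.2), fun τ' hτ' => ?_⟩
  apply h2
  intro i hi
  exact hFi i hi (τ' i) fun z hz =>
    hτ' i z (Finset.mem_biUnion.mpr ⟨⟨i, hi⟩, Finset.mem_attach _ _, hz⟩)

open Classical in
/-- The permutation of `ℤ` swapping `b j` with `c j` for each `j`, fixing everything else. -/
def multiSwap {k : ℕ} (b c : Fin k → ℤ) : ℤ → ℤ := fun z =>
  if h : ∃ j, b j = z then c h.choose
  else if h : ∃ j, c j = z then b h.choose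
  else z

section multiSwap

variable {k : ℕ} {b c : Fin k → ℤ} (hb : Function.Injective b) (hc : Function.Injective c)
  (hd : ∀ j j', b j ≠ c j')

include hb in
lemma multiSwap_b (j : Fin k) : multiSwap b c (b j) = c j := by
  have h : ∃ j', b j' = b j := ⟨j, rfl⟩
  rw [multiSwap, dif_pos h]
  exact congrArg c (hb h.choose_spec)

include hc hd in
lemma multiSwap_c (j : Fin k) : multiSwap b c (c j) = b j := by
  have h1 : ¬ ∃ j', b j' = c j := by rintro ⟨j', hj'⟩; exact hd j' j hj'
  have h2 : ∃ j', c j' = c j := ⟨j, rfl⟩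
  rw [multiSwap, dif_neg h1, dif_pos h2]
  exact congrArg b (hc h2.choose_spec)

lemma multiSwap_fix {z : ℤ} (h1 : ∀ j, b j ≠ z) (h2 : ∀ j, c j ≠ z) :
    multiSwap b c z = z := by
  rw [multiSwap, dif_neg (by rintro ⟨j, hj⟩; exact h1 j hj),
    dif_neg (by rintro ⟨j, hj⟩; exact h2 j hj)]

include hb hc hd in
lemma multiSwap_involutive : Function.Involutive (multiSwap b c) := by
  intro z
  by_cases h1 : ∃ j, b j = z
  · obtain ⟨j, rfl⟩ := h1
    rw [multiSwap_b hb j, multiSwap_c hc hd j]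
  · by_cases h2 : ∃ j, c j = z
    · obtain ⟨j, rfl⟩ := h2
      rw [multiSwap_c hc hd j, multiSwap_b hb j]
    · push_neg at h1 h2
      rw [multiSwap_fix h1 h2, multiSwap_fix h1 h2]

/-- `multiSwap` as a permutation. -/
def multiSwapPerm : Equiv.Perm ℤ :=
  (multiSwap_involutive hb hc hd).toPerm _

lemma multiSwapPerm_apply (z : ℤ) : multiSwapPerm hb hc hd z = multiSwap b c z := rfl

end multiSwap

lemma dense_S {k n : ℕ} (hn : 1 ≤ n) (x y : Fin k → ℤ)
    (hx : Function.Injective x) (hy : Function.Injective y) :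
    Dense {τ : Fin n → Equiv.Perm ℤ |
      ∃ φ ∈ Subgroup.closure (Set.range (Fin.cons shift τ)), ∀ j, φ (x j) = y j} := by
  rw [dense_iff_inter_open]
  rintro U hU ⟨τ, hτ⟩
  obtain ⟨F, hF⟩ := nbhd U hU τ hτ
  set i₀ : Fin n := ⟨0, hn⟩ with hi₀
  obtain ⟨M, hM⟩ := Infinite.exists_notMem_finset
    (F.biUnion fun z => Finset.image (fun j => z - x j) Finset.univ)
  have hxM : ∀ j, x j + M ∉ F := by
    intro j hj
    exact hM (Finset.mem_biUnion.mpr ⟨x j + M, hj,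
      Finset.mem_image.mpr ⟨j, Finset.mem_univ _, by ring⟩⟩)
  set b : Fin k → ℤ := fun j => τ i₀ (x j + M) with hbdef
  have hbinj : Function.Injective b := by
    intro j j' h
    exact hx (by have := (τ i₀).injective h; omega)
  set G : Finset ℤ := F.image (τ i₀) with hGdef
  set B : Finset ℤ := Finset.image b Finset.univ with hBdef
  obtain ⟨M', hM'⟩ := Infinite.exists_notMem_finset
    ((G ∪ B).biUnion fun z => Finset.image (fun j => z - y j) Finset.univ)
  have hyM' : ∀ j, y j + M' ∉ G ∪ B := by
    intro j hj
    exact hM' (Finset.mem_biUnion.mpr ⟨y j + M', hj,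
      Finset.mem_image.mpr ⟨j, Finset.mem_univ _, by ring⟩⟩)
  set c : Fin k → ℤ := fun j => y j + M' with hcdef
  have hcinj : Function.Injective c := by
    intro j j' h
    exact hy (by simp only [hcdef] at h; omega)
  have hd : ∀ j j', b j ≠ c j' := by
    intro j j' h
    apply hyM' j'
    apply Finset.mem_union_right
    exact Finset.mem_image.mpr ⟨j, Finset.mem_univ _, h⟩
  set π := multiSwapPerm hbinj hcinj hd with hπ
  set τ' : Fin n → Equiv.Perm ℤ := Function.update τ i₀ (π * τ i₀) with hτ'def
  have hτ'i₀ : τ' i₀ = π * τ i₀ := by rw [hτ'def, Function.update_self]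
  have hτ'F : ∀ i, ∀ z ∈ F, τ' i z = τ i z := by
    intro i z hz
    by_cases hi : i = i₀
    · subst hi
      rw [hτ'i₀, Equiv.Perm.mul_apply, hπ, multiSwapPerm_apply]
      apply multiSwap_fix
      · intro j hj
        exact hxM j (by rwa [(τ i₀).injective hj])
      · intro j hj
        apply hyM' j
        apply Finset.mem_union_left
        show c j ∈ G
        rw [hj, hGdef]
        exact Finset.mem_image.mpr ⟨z, hz, rfl⟩
    · rw [hτ'def, Function.update_of_ne hi]
  refine ⟨τ', hF τ' hτ'F, ?_⟩
  show ∃ φ ∈ Subgroup.closure (Set.range (Fin.cons shift τ')), ∀ j, φ (x j) = y j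
  refine ⟨shift ^ (-M') * τ' i₀ * shift ^ M, ?_, ?_⟩
  · have hs : shift ∈ Set.range (Fin.cons shift τ' : Fin (n+1) → Equiv.Perm ℤ) :=
      ⟨0, Fin.cons_zero _ _⟩
    have ht : τ' i₀ ∈ Set.range (Fin.cons shift τ' : Fin (n+1) → Equiv.Perm ℤ) :=
      ⟨i₀.succ, Fin.cons_succ _ _ _⟩
    exact mul_mem (mul_mem (zpow_mem (Subgroup.subset_closure hs) _)
      (Subgroup.subset_closure ht)) (zpow_mem (Subgroup.subset_closure hs) _)
  · intro j
    have h1 : τ' i₀ (x j + M) = c j := by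
      rw [hτ'i₀, Equiv.Perm.mul_apply, hπ, multiSwapPerm_apply]
      exact multiSwap_b hbinj j
    rw [Equiv.Perm.mul_apply, Equiv.Perm.mul_apply, shift_zpow M (x j), h1, shift_zpow]
    show y j + M' + -M' = y j
    ring

/-- for fixed `k`-tuples of distinct integers `x, y`, the set of tuples
`(τ₁, …, τₙ)` such that some element of `⟨σ, τ₁, …, τₙ⟩` sends each `xⱼ` to `yⱼ` is open
and dense. -/
theorem stmt_10 (k n : ℕ) (hk : 1 ≤ k) (hn : 1 ≤ n)
    (x y : Fin k → ℤ) (hx : Function.Injective x) (hy : Function.Injective y) :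
    IsOpen {τ : Fin n → Equiv.Perm ℤ |
        ∃ φ ∈ Subgroup.closure (Set.range (Fin.cons shift τ)), ∀ j, φ (x j) = y j} ∧
      Dense {τ : Fin n → Equiv.Perm ℤ |
        ∃ φ ∈ Subgroup.closure (Set.range (Fin.cons shift τ)), ∀ j, φ (x j) = y j} := by
  exact ⟨isOpen_S x y, dense_S hn x y hx hy⟩
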